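/- Let N ≥ 2 and let g : (0,1] → ℝ be continuous with ∫₀^{1/4} r^{N-3} g(r)² dr = +∞. Then there exists a ∈ (0, 1/4) such that, with η₀(r) = 1 for a ≤ r < 1/4 and η₀(r) = 2 - 4r for 1/4 ≤ r ≤ 1/2, one has η₀(a) = 1, η₀(1/2) = 0, and ∫_a^{1/2} r^{N-1} g(r)² ( η₀'(r)² - (N-1)/r² · η₀(r)² ) dr < 0. -/

import Mathlib

open Set MeasureTheory intervalIntegral

open Filter Topology in
theorem stmt5_aux (h : ℝ → ℝ) (hh : ContinuousOn h (Ioc (0 : ℝ) 1))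
    (hpos : ∀ r ∈ Ioc (0:ℝ) 1, 0 ≤ h r)
    (hdiv : ¬ IntegrableOn h (Ioc (0 : ℝ) (1 / 4))) (C : ℝ) :
    ∃ a ∈ Ioo (0 : ℝ) (1/4), C < ∫ r in a..(1/4 : ℝ), h r := by
  by_contra hcon
  push_neg at hcon
  set a : ℕ → ℝ := fun n => (1 / ((n : ℝ) + 1)) / 8 with ha
  have hamem : ∀ n, a n ∈ Ioo (0:ℝ) (1/4) := by
    intro n
    have h1 : (0:ℝ) < (n : ℝ) + 1 := by positivity
    have h2 : (1:ℝ) / ((n:ℝ)+1) ≤ 1 := by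
      rw [div_le_one h1]; linarith [Nat.cast_nonneg (α := ℝ) n]
    constructor
    · positivity
    · simp only [ha]; linarith
  have hsub : ∀ n, Icc (a n) (1/4 : ℝ) ⊆ Ioc (0:ℝ) 1 := by
    intro n x hx
    exact ⟨lt_of_lt_of_le (hamem n).1 hx.1, le_trans hx.2 (by norm_num)⟩
  have hInt : ∀ n, IntegrableOn h (Ioc (a n) (1/4 : ℝ)) := by
    intro n
    exact ((hh.mono (hsub n)).integrableOn_Icc).mono_set Ioc_subset_Icc_self
  have htend : Tendsto a atTop (𝓝 0) := by
    rw [ha]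
    simpa using tendsto_one_div_add_atTop_nhds_zero_nat.div_const (8:ℝ)
  refine hdiv (integrableOn_Ioc_of_intervalIntegral_norm_bounded_left
    (I := C) hInt htend (Filter.Eventually.of_forall fun n => ?_))
  have hval : ∫ x in Ioc (a n) (1/4 : ℝ), ‖h x‖ = ∫ x in Ioc (a n) (1/4 : ℝ), h x := by
    refine setIntegral_congr_fun measurableSet_Ioc fun x hx => ?_
    exact Real.norm_of_nonneg (hpos x (hsub n ⟨le_of_lt hx.1, hx.2⟩))
  rw [hval]
  have h0 : ∫ x in Ioc (a n) (1/4 : ℝ), h x = ∫ r in (a n)..(1/4:ℝ), h r :=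
    (integral_of_le (le_of_lt (hamem n).2)).symm
  rw [h0]
  exact hcon (a n) (hamem n)

theorem stmt_5 (N : ℕ) (hN : 2 ≤ N) (g : ℝ → ℝ)
    (hg : ContinuousOn g (Ioc (0 : ℝ) 1))
    (hdiv : ¬ IntegrableOn (fun r : ℝ => r ^ ((N : ℝ) - 3) * (g r) ^ 2)
      (Ioc (0 : ℝ) (1 / 4)))
    (η₀ : ℝ → ℝ)
    (hη₀ : η₀ = fun r : ℝ => if r < 1 / 4 then 1 else 2 - 4 * r) :
    ∃ a ∈ Ioo (0 : ℝ) (1 / 4),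
      η₀ a = 1 ∧ η₀ (1 / 2) = 0 ∧
      (∫ r in a..(1 / 2 : ℝ),
        r ^ ((N : ℝ) - 1) * (g r) ^ 2 *
          ((deriv η₀ r) ^ 2 - ((N : ℝ) - 1) / r ^ 2 * (η₀ r) ^ 2)) < 0 := by
  have hN1 : (1:ℝ) ≤ (N:ℝ) - 1 := by
    have : (2:ℝ) ≤ (N:ℝ) := by exact_mod_cast hN
    linarith
  set f : ℝ → ℝ := fun r => r ^ ((N : ℝ) - 3) * (g r) ^ 2 with hf
  have hfc : ContinuousOn f (Ioc (0:ℝ) 1) := by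
    apply ContinuousOn.mul
    · intro x hx
      exact (Real.continuousAt_rpow_const x _ (Or.inl (ne_of_gt hx.1))).continuousWithinAt
    · exact hg.pow 2
  have hfpos : ∀ r ∈ Ioc (0:ℝ) 1, 0 ≤ f r := fun r hr => by
    have := Real.rpow_nonneg (le_of_lt hr.1) ((N:ℝ) - 3)
    positivity
  -- the derivative of η₀
  have hderiv1 : ∀ r : ℝ, r < 1/4 → deriv η₀ r = 0 := by
    intro r hr
    have hev : η₀ =ᶠ[nhds r] fun _ => (1:ℝ) := by
      filter_upwards [Iio_mem_nhds hr] with x hx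
      rw [hη₀]
      exact if_pos (Set.mem_Iio.mp hx)
    rw [hev.deriv_eq]; exact deriv_const r 1
  have hderiv2 : ∀ r : ℝ, 1/4 < r → deriv η₀ r = -4 := by
    intro r hr
    have hev : η₀ =ᶠ[nhds r] fun x => 2 - 4 * x := by
      filter_upwards [Ioi_mem_nhds hr] with x hx
      rw [hη₀]
      exact if_neg (not_lt.mpr (le_of_lt (Set.mem_Ioi.mp hx)))
    rw [hev.deriv_eq]
    have : HasDerivAt (fun x : ℝ => 2 - 4 * x) (0 - 4 * 1) r :=
      (hasDerivAt_const r (2:ℝ)).sub ((hasDerivAt_id r).const_mul 4)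
    simpa using this.deriv
  set F : ℝ → ℝ := fun r =>
    r ^ ((N : ℝ) - 1) * (g r) ^ 2 *
      ((deriv η₀ r) ^ 2 - ((N : ℝ) - 1) / r ^ 2 * (η₀ r) ^ 2) with hF
  set F₂ : ℝ → ℝ := fun r =>
    r ^ ((N : ℝ) - 1) * (g r) ^ 2 *
      (16 - ((N : ℝ) - 1) / r ^ 2 * (2 - 4 * r) ^ 2) with hF₂
  set C : ℝ := ∫ r in (1/4 : ℝ)..(1/2 : ℝ), F₂ r with hC
  obtain ⟨a, ha, haC⟩ := stmt5_aux f hfc hfpos hdiv (C / ((N:ℝ) - 1))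
  have ha0 : (0:ℝ) < a := ha.1
  have ha4 : a < 1/4 := ha.2
  have hval1 : η₀ a = 1 := by rw [hη₀]; exact if_pos ha4
  have hval2 : η₀ (1/2 : ℝ) = 0 := by rw [hη₀]; norm_num
  refine ⟨a, ha, hval1, hval2, ?_⟩
  -- key pointwise identity on (a, 1/4)
  have hkey : ∀ x ∈ Ioo a (1/4 : ℝ), F x = -((N:ℝ) - 1) * f x := by
    intro x hx
    have hx0 : (0:ℝ) < x := lt_trans ha0 hx.1
    have hrpow : x ^ ((N:ℝ) - 1) = x ^ ((N:ℝ) - 3) * x ^ 2 := by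
      rw [show ((N:ℝ) - 1) = ((N:ℝ) - 3) + 2 by ring, Real.rpow_add hx0]
      norm_num [Real.rpow_two]
    have hd : deriv η₀ x = 0 := hderiv1 x hx.2
    have hv : η₀ x = 1 := by rw [hη₀]; exact if_pos hx.2
    show x ^ ((N:ℝ) - 1) * (g x) ^ 2 *
      ((deriv η₀ x) ^ 2 - ((N:ℝ) - 1) / x ^ 2 * (η₀ x) ^ 2)
      = -((N:ℝ) - 1) * (x ^ ((N:ℝ) - 3) * (g x) ^ 2)
    rw [hd, hv, hrpow]
    field_simp
    ring
  have hFeq2 : ∀ x ∈ Ioc (1/4 : ℝ) (1/2 : ℝ), F x = F₂ x := by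
    intro x hx
    have hd : deriv η₀ x = -4 := hderiv2 x hx.1
    have hv : η₀ x = 2 - 4 * x := by rw [hη₀]; exact if_neg (not_lt.mpr (le_of_lt hx.1))
    show x ^ ((N:ℝ) - 1) * (g x) ^ 2 *
      ((deriv η₀ x) ^ 2 - ((N:ℝ) - 1) / x ^ 2 * (η₀ x) ^ 2)
      = x ^ ((N:ℝ) - 1) * (g x) ^ 2 * (16 - ((N:ℝ) - 1) / x ^ 2 * (2 - 4 * x) ^ 2)
    rw [hd, hv]
    norm_num
  -- integrability
  have hsub1 : Icc a (1/4 : ℝ) ⊆ Ioc (0:ℝ) 1 := fun x hx =>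
    ⟨lt_of_lt_of_le ha0 hx.1, le_trans hx.2 (by norm_num)⟩
  have hsub2 : Icc (1/4 : ℝ) (1/2 : ℝ) ⊆ Ioc (0:ℝ) 1 := fun x hx =>
    ⟨lt_of_lt_of_le (by norm_num) hx.1, le_trans hx.2 (by norm_num)⟩
  have hF₁c : ContinuousOn (fun x => -((N:ℝ) - 1) * f x) (Icc a (1/4 : ℝ)) :=
    (continuousOn_const.mul (hfc.mono hsub1))
  have hF₂c : ContinuousOn F₂ (Icc (1/4 : ℝ) (1/2 : ℝ)) := by
    apply ContinuousOn.mul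
    · exact ContinuousOn.mul
        (fun x hx => (Real.continuousAt_rpow_const x _
          (Or.inl (ne_of_gt (lt_of_lt_of_le (by norm_num) hx.1)))).continuousWithinAt)
        ((hg.mono hsub2).pow 2)
    · apply ContinuousOn.sub continuousOn_const
      apply ContinuousOn.mul
      · apply ContinuousOn.div continuousOn_const (continuousOn_pow 2)
        intro x hx
        have : (0:ℝ) < x := lt_of_lt_of_le (by norm_num) hx.1
        positivity
      · exact ((continuousOn_const.sub (continuousOn_const.mul continuousOn_id)).pow 2)
  have hae1 : ∀ᵐ x : ℝ, x ∈ Set.uIoc a (1/4 : ℝ) → F x = -((N:ℝ) - 1) * f x := by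
    filter_upwards [(Set.countable_singleton (1/4:ℝ)).ae_notMem volume] with x hx hmem
    rw [uIoc_of_le (le_of_lt ha4)] at hmem
    have hxne : x ≠ 1/4 := fun h => hx (by simp [h])
    exact hkey x ⟨hmem.1, lt_of_le_of_ne hmem.2 hxne⟩
  have hres1 : F =ᵐ[volume.restrict (Set.uIoc a (1/4 : ℝ))] fun x => -((N:ℝ) - 1) * f x :=
    (ae_restrict_iff' measurableSet_uIoc).mpr hae1
  have hInt1 : IntervalIntegrable F volume a (1/4 : ℝ) := by
    refine IntervalIntegrable.congr_ae ?_ hres1.symm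
    apply ContinuousOn.intervalIntegrable
    rwa [uIcc_of_le (le_of_lt ha4)]
  have hae2 : ∀ᵐ x : ℝ, x ∈ Set.uIoc (1/4 : ℝ) (1/2 : ℝ) → F x = F₂ x := by
    refine Filter.Eventually.of_forall fun x hx => ?_
    rw [uIoc_of_le (by norm_num : (1/4:ℝ) ≤ 1/2)] at hx
    exact hFeq2 x hx
  have hres2 : F =ᵐ[volume.restrict (Set.uIoc (1/4 : ℝ) (1/2 : ℝ))] F₂ :=
    (ae_restrict_iff' measurableSet_uIoc).mpr hae2
  have hInt2 : IntervalIntegrable F volume (1/4 : ℝ) (1/2 : ℝ) := by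
    refine IntervalIntegrable.congr_ae ?_ hres2.symm
    apply ContinuousOn.intervalIntegrable
    rwa [uIcc_of_le (by norm_num : (1/4:ℝ) ≤ 1/2)]
  have hsplit := integral_add_adjacent_intervals hInt1 hInt2
  have hv1 : ∫ r in a..(1/4 : ℝ), F r
      = -((N:ℝ) - 1) * ∫ r in a..(1/4 : ℝ), f r := by
    rw [integral_congr_ae hae1, intervalIntegral.integral_const_mul]
  have hv2 : ∫ r in (1/4 : ℝ)..(1/2 : ℝ), F r = C := integral_congr_ae hae2
  have hgoal : (∫ r in a..(1/2 : ℝ), F r) < 0 := by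
    rw [← hsplit, hv1, hv2]
    have hpos : (0:ℝ) < (N:ℝ) - 1 := by linarith
    have := (div_lt_iff₀ hpos).mp haC
    nlinarith
  exact hgoal
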